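/- Let S be the image under α (α(a) = a^p b, α(b) = a^{p'} b, p,p' ≥ 1, |p−p'| = 1) of a balanced binary word u. If g^3 is a factor of S with g primitive and |g| ≥ 2, then g^3 has a cyclic shift whose period is block-complete; consequently, u itself contains a square h^2 with α(h) a cyclic conjugate of g. -/
import Mathlib


/-- `listPow h m` is the word `h` repeated `m` times. -/
def listPow (h : List Bool) (m : ℕ) : List Bool := (List.replicate m h).flatten

/-- A word is primitive if it is not `h^m` for any word `h` and integer `m ≥ 2`. -/
def Primitive (g : List Bool) : Prop := ∀ h m, 2 ≤ m → g ≠ listPow h m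

/-- The Sturmian morphism on letters: `a ↦ a^p b`, `b ↦ a^{p'} b`
(`a` is `false`, `b` is `true`). -/
def alphaMap (p p' : ℕ) : Bool → List Bool
  | false => List.replicate p false ++ [true]
  | true  => List.replicate p' false ++ [true]

/-- The Sturmian morphism extended to words. -/
def alpha (p p' : ℕ) (w : List Bool) : List Bool := w.flatMap (alphaMap p p')

/-- A valid parameter pair: `p, p' ≥ 1` and `|p − p'| = 1`. -/
def ValidPair (p p' : ℕ) : Prop := 1 ≤ p ∧ 1 ≤ p' ∧ (p = p' + 1 ∨ p' = p + 1)

/-- A finite binary word is balanced if any two equal-length factors have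
`b`-counts differing by at most 1. -/
def BalancedFin (w : List Bool) : Prop :=
  ∀ u v : List Bool, u <:+: w → v <:+: w → u.length = v.length →
    u.count true ≤ v.count true + 1

/-- The factor of the infinite word `w` of length `n` starting at position `i`. -/
def infFactorAt (w : ℕ → Bool) (i n : ℕ) : List Bool :=
  (List.range n).map (fun k => w (i + k))

/-- `u` is a factor of the infinite word `w`. -/
def InfFactor (u : List Bool) (w : ℕ → Bool) : Prop :=
  ∃ i, u = infFactorAt w i u.length

/-- An infinite binary word is balanced if any two equal-length factors have
`b`-counts differing by at most 1. -/
def BalancedInf (w : ℕ → Bool) : Prop :=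
  ∀ u v : List Bool, InfFactor u w → InfFactor v w → u.length = v.length →
    u.count true ≤ v.count true + 1

/-- Ultimately periodic infinite word. -/
def UltPeriodic (w : ℕ → Bool) : Prop :=
  ∃ N q, 1 ≤ q ∧ ∀ n, N ≤ n → w (n + q) = w n

section Aux

lemma alpha_append (p p' : ℕ) (a b : List Bool) :
    alpha p p' (a ++ b) = alpha p p' a ++ alpha p p' b := by
  simp [alpha]

lemma alphaMap_block (p p' : ℕ) (c : Bool) :
    ∃ k, alphaMap p p' c = List.replicate k false ++ [true] := by
  cases c <;> exact ⟨_, rfl⟩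

lemma takeWhile_block (m : ℕ) (r : List Bool) :
    (List.replicate m false ++ true :: r).takeWhile (fun b => !b) =
      List.replicate m false := by
  induction m with
  | zero => simp [List.takeWhile]
  | succ n ih => simpa [List.replicate_succ, List.takeWhile] using ih

lemma alpha_injective (p p' : ℕ) (hne : p ≠ p') :
    ∀ h1 h2 : List Bool, alpha p p' h1 = alpha p p' h2 → h1 = h2 := by
  intro h1
  induction h1 with
  | nil =>
    intro h2 he
    cases h2 with
    | nil => rfl
    | cons d t2 =>
      exfalso
      have : ([] : List Bool) = alphaMap p p' d ++ alpha p p' t2 := by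
        simpa [alpha] using he
      cases d <;> simp [alphaMap] at this
  | cons c t1 ih =>
    intro h2 he
    cases h2 with
    | nil =>
      exfalso
      have : alphaMap p p' c ++ alpha p p' t1 = ([] : List Bool) := by
        simpa [alpha] using he
      cases c <;> simp [alphaMap] at this
    | cons d t2 =>
      have he' : alphaMap p p' c ++ alpha p p' t1 =
          alphaMap p p' d ++ alpha p p' t2 := by simpa [alpha] using he
      have hcd : c = d := by
        by_contra hcd
        have key : ∀ (m m' : ℕ) (r r' : List Bool),
            List.replicate m false ++ true :: r =
              List.replicate m' false ++ true :: r' → m = m' := by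
          intro m m' r r' hm
          have := congrArg (List.takeWhile (fun b => !b)) hm
          rw [takeWhile_block, takeWhile_block] at this
          simpa using congrArg List.length this
        cases c <;> cases d
        · exact hcd rfl
        · exact hne (key p p' _ _ (by simpa [alphaMap] using he'))
        · exact hne (key p' p _ _ (by simpa [alphaMap] using he')).symm
        · exact hcd rfl
      subst hcd
      have ht : alpha p p' t1 = alpha p p' t2 := by
        exact List.append_cancel_left he'
      rw [ih _ ht]

lemma decode_prefix (p p' : ℕ) : ∀ (u w t : List Bool),
    alpha p p' u = w ++ t → (w = [] ∨ w.getLast? = some true) →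
    ∃ h, h <+: u ∧ alpha p p' h = w := by
  intro u
  induction u with
  | nil =>
    intro w t heq _
    have hw : w = [] := by
      have : w ++ t = [] := by simpa [alpha] using heq.symm
      exact (List.append_eq_nil_iff.mp this).1
    exact ⟨[], List.nil_prefix, by simp [alpha, hw]⟩
  | cons c u' ih =>
    intro w t heq hw
    rcases hw with hw | hw
    · exact ⟨[], List.nil_prefix, by simp [alpha, hw]⟩
    · obtain ⟨k, hB⟩ := alphaMap_block p p' c
      have heq' : alphaMap p p' c ++ alpha p p' u' = w ++ t := by
        simpa [alpha] using heq
      have hwpre : w <+: alphaMap p p' c ++ alpha p p' u' := ⟨t, heq'.symm⟩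
      have hBpre : alphaMap p p' c <+: alphaMap p p' c ++ alpha p p' u' :=
        ⟨alpha p p' u', rfl⟩
      have hlenB : (alphaMap p p' c).length ≤ w.length := by
        by_contra hlt
        push_neg at hlt
        have hwB : w <+: alphaMap p p' c :=
          List.prefix_of_prefix_length_le hwpre hBpre (le_of_lt hlt)
        have hlk : w.length ≤ k := by
          have : (alphaMap p p' c).length = k + 1 := by simp [hB]
          omega
        have hwrep : w <+: List.replicate k false := by
          have h1 : w <+: List.replicate k false ++ [true] := by rw [← hB]; exact hwB
          have h2 : List.replicate k false <+: List.replicate k false ++ [true] :=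
            ⟨[true], rfl⟩
          exact List.prefix_of_prefix_length_le h1 h2 (by simpa using hlk)
        have htmem : true ∈ w := List.mem_of_mem_getLast? hw
        have : (true : Bool) = false :=
          List.eq_of_mem_replicate (hwrep.subset htmem)
        simp at this
      -- w starts with the block
      have hBw : alphaMap p p' c <+: w :=
        List.prefix_of_prefix_length_le hBpre hwpre hlenB
      obtain ⟨w', hw'⟩ := hBw
      have hrest : alpha p p' u' = w' ++ t := by
        have : alphaMap p p' c ++ alpha p p' u' =
            alphaMap p p' c ++ (w' ++ t) := by
          rw [heq', ← hw']; simp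
        exact List.append_cancel_left this
      have hw'last : w' = [] ∨ w'.getLast? = some true := by
        rcases eq_or_ne w' [] with h0 | h0
        · exact Or.inl h0
        · right
          rw [← hw'] at hw
          rwa [List.getLast?_append_of_ne_nil _ h0] at hw
      obtain ⟨h, hpre, hah⟩ := ih w' t hrest hw'last
      refine ⟨c :: h, ?_, ?_⟩
      · exact (List.prefix_cons_inj c).mpr hpre
      · have hsplit : alpha p p' (c :: h) = alphaMap p p' c ++ alpha p p' h := by
          simp [alpha]
        rw [hsplit, hah, hw']

lemma decode_infix (p p' : ℕ) : ∀ (u s w t : List Bool),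
    alpha p p' u = s ++ w ++ t → (s = [] ∨ s.getLast? = some true) →
    (w = [] ∨ w.getLast? = some true) →
    ∃ h, h <:+: u ∧ alpha p p' h = w := by
  intro u
  induction u with
  | nil =>
    intro s w t heq _ _
    have : s ++ w ++ t = [] := by simpa [alpha] using heq.symm
    have hw : w = [] := by
      rcases List.append_eq_nil_iff.mp this with ⟨h1, _⟩
      exact (List.append_eq_nil_iff.mp h1).2
    exact ⟨[], List.nil_infix, by simp [alpha, hw]⟩
  | cons c u' ih =>
    intro s w t heq hs hw
    rcases hs with hs | hs
    · subst hs
      obtain ⟨h, hpre, hah⟩ := decode_prefix p p' (c :: u') w t (by simpa using heq) hw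
      exact ⟨h, hpre.isInfix, hah⟩
    · obtain ⟨k, hB⟩ := alphaMap_block p p' c
      have heq' : alphaMap p p' c ++ alpha p p' u' = s ++ (w ++ t) := by
        rw [← List.append_assoc]; simpa [alpha] using heq
      have hspre : s <+: alphaMap p p' c ++ alpha p p' u' := ⟨w ++ t, heq'.symm⟩
      have hBpre : alphaMap p p' c <+: alphaMap p p' c ++ alpha p p' u' :=
        ⟨alpha p p' u', rfl⟩
      have hlenB : (alphaMap p p' c).length ≤ s.length := by
        by_contra hlt
        push_neg at hlt
        have hsB : s <+: alphaMap p p' c :=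
          List.prefix_of_prefix_length_le hspre hBpre (le_of_lt hlt)
        have hlk : s.length ≤ k := by
          have : (alphaMap p p' c).length = k + 1 := by simp [hB]
          omega
        have hsrep : s <+: List.replicate k false := by
          have h1 : s <+: List.replicate k false ++ [true] := by rw [← hB]; exact hsB
          have h2 : List.replicate k false <+: List.replicate k false ++ [true] :=
            ⟨[true], rfl⟩
          exact List.prefix_of_prefix_length_le h1 h2 (by simpa using hlk)
        have htmem : true ∈ s := List.mem_of_mem_getLast? hs
        have : (true : Bool) = false :=
          List.eq_of_mem_replicate (hsrep.subset htmem)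
        simp at this
      have hBs : alphaMap p p' c <+: s :=
        List.prefix_of_prefix_length_le hBpre hspre hlenB
      obtain ⟨s', hs'⟩ := hBs
      have hrest : alpha p p' u' = s' ++ w ++ t := by
        have : alphaMap p p' c ++ alpha p p' u' =
            alphaMap p p' c ++ (s' ++ (w ++ t)) := by
          rw [heq', ← hs']; simp
        rw [List.append_assoc]
        exact List.append_cancel_left this
      have hs'last : s' = [] ∨ s'.getLast? = some true := by
        rcases eq_or_ne s' [] with h0 | h0
        · exact Or.inl h0
        · right
          rw [← hs'] at hs
          rwa [List.getLast?_append_of_ne_nil _ h0] at hs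
      obtain ⟨h, hinf, hah⟩ := ih s' w t hrest hs'last hw
      exact ⟨h, List.infix_cons hinf, hah⟩

end Aux

/-- if g³ is a factor of S = α(u) with u balanced, g primitive
of length ≥ 2, then some cyclic conjugate of g is block-complete: it equals
α(h) for some h with h² a factor of u. -/
theorem stmt10 (p p' : ℕ) (h : ValidPair p p') (u g : List Bool)
    (hbal : BalancedFin u) (hgprim : Primitive g) (hlen : 2 ≤ g.length)
    (hfac : listPow g 3 <:+: alpha p p' u) :
    ∃ x y hh : List Bool, g = x ++ y ∧ alpha p p' hh = y ++ x ∧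
      (hh ++ hh) <:+: u := by
  obtain ⟨hp, hp', hpp'⟩ := h
  have hne : p ≠ p' := by omega
  -- g contains a `true`
  have hmem : true ∈ g := by
    by_contra hmem
    have hall : ∀ b ∈ g, b = false := by
      intro b hb
      cases b with
      | false => rfl
      | true => exact absurd hb hmem
    have hrep : g = List.replicate g.length false := List.eq_replicate_of_mem hall
    have hlp : ∀ n, listPow [false] n = List.replicate n false := by
      intro n
      induction n with
      | zero => simp [listPow]
      | succ n ih =>
        have h1 : listPow [false] (n + 1) = false :: listPow [false] n := by
          simp [listPow, List.replicate_succ]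
        rw [h1, ih, List.replicate_succ]
    have : g = listPow [false] g.length := by rw [hlp]; exact hrep
    exact hgprim [false] g.length hlen this
  obtain ⟨x0, y, hg⟩ := List.append_of_mem hmem
  set x : List Bool := x0 ++ [true] with hx
  have hgxy : g = x ++ y := by simp [hx, hg]
  have hxlast : x.getLast? = some true := by simp [hx]
  have hyx_last : (y ++ x).getLast? = some true := by
    rw [List.getLast?_append_of_ne_nil _ (by simp [hx] : x ≠ [])]; exact hxlast
  obtain ⟨s₀, t₀, hST⟩ := hfac
  have hS : alpha p p' u =
      (s₀ ++ x) ++ (((y ++ x) ++ (y ++ x)) ++ (y ++ t₀)) := by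
    rw [← hST]
    have : listPow g 3 = g ++ g ++ g := by simp [listPow, List.replicate]
    rw [this, hgxy]
    simp [List.append_assoc]
  -- decode (y++x)
  obtain ⟨hh, _, hahh⟩ := decode_infix p p' u (s₀ ++ x) (y ++ x)
      ((y ++ x) ++ (y ++ t₀))
      (by rw [hS]; simp [List.append_assoc])
      (Or.inr (by rw [List.getLast?_append_of_ne_nil _ (by simp [hx] : x ≠ [])]; exact hxlast))
      (Or.inr hyx_last)
  -- decode (y++x)++(y++x)
  obtain ⟨h2, hinf2, hah2⟩ := decode_infix p p' u (s₀ ++ x) ((y ++ x) ++ (y ++ x))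
      (y ++ t₀)
      (by rw [hS]; simp [List.append_assoc])
      (Or.inr (by rw [List.getLast?_append_of_ne_nil _ (by simp [hx] : x ≠ [])]; exact hxlast))
      (Or.inr (by rw [List.getLast?_append_of_ne_nil _ (by simp [hx] : (y ++ x) ≠ [])]; exact hyx_last))
  have hh2 : h2 = hh ++ hh := by
    apply alpha_injective p p' hne
    rw [hah2, alpha_append, hahh]
  exact ⟨x, y, hh, hgxy, hahh, hh2 ▸ hinf2⟩
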